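/- Let γ > 1 and let ω be a standard mollifier on ℝ^d. There exists a constant C = C(γ) such that for every measurable ρ : T^d → (0,∞), every ε > 0, and almost every x ∈ T^d, one has |(ρ^γ ⋆ ω_ε)(x) − ((ρ ⋆ ω_ε)(x))^γ| ≤ C ∫_{ℝ^d} |ρ(x−y) − ρ(x)|^γ ω_ε(y) dy + C ∫_{ℝ^d} ρ(x−y)^{γ−2} |ρ(x−y) − ρ(x)|^2 ω_ε(y) dy + C ( ∫_{ℝ^d} ρ(x−y) ω_ε(y) dy )^{γ−2} ∫_{ℝ^d} |ρ(x−y) − ρ(x)|^2 ω_ε(y) dy, provided all the integrals on the right-hand side are finite (e.g. when ρ and ρ^{-1} are in L^∞(T^d)). -/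

import Mathlib

open MeasureTheory Set Filter ENNReal

noncomputable section

abbrev Ed (d : ℕ) := EuclideanSpace ℝ (Fin d)

def unitCube (d : ℕ) : Set (Ed d) := {x | ∀ i, x i ∈ Set.Ico (0:ℝ) 1}

def torusMeasure (d : ℕ) : Measure (Ed d) := (volume : Measure (Ed d)).restrict (unitCube d)

def intVec {d : ℕ} (k : Fin d → ℤ) : Ed d := WithLp.toLp 2 (fun i => (k i : ℝ))

def PeriodicF {d : ℕ} {F : Type*} (f : Ed d → F) : Prop :=
  ∀ (x : Ed d) (k : Fin d → ℤ), f (x + intVec k) = f x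

def tLp (d : ℕ) (p : ℝ≥0∞) {F : Type*} [NormedAddCommGroup F] (f : Ed d → F) : ℝ≥0∞ :=
  eLpNorm f p (torusMeasure d)

def Vnorm (d : ℕ) (β δ : ℝ) (p : ℝ≥0∞) {F : Type*} [NormedAddCommGroup F] (f : Ed d → F) : ℝ≥0∞ :=
  ⨆ (h : Ed d) (_ : 0 < ‖h‖ ∧ ‖h‖ < δ),
    ENNReal.ofReal (‖h‖ ^ (-β)) * tLp d p (fun x => f (x + h) - f x)

structure IsMollifier (d : ℕ) (ω : Ed d → ℝ) : Prop where
  smooth : ContDiff ℝ (⊤ : ℕ∞) ω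
  nonneg : ∀ x, 0 ≤ ω x
  support_subset : Function.support ω ⊆ Metric.closedBall 0 1
  integral_one : ∫ x, ω x = 1

def mollKer (d : ℕ) (ω : Ed d → ℝ) (ε : ℝ) (x : Ed d) : ℝ := ε⁻¹ ^ d * ω (ε⁻¹ • x)

def moll (d : ℕ) (ω : Ed d → ℝ) (ε : ℝ) {F : Type*} [NormedAddCommGroup F] [NormedSpace ℝ F]
    (f : Ed d → F) (x : Ed d) : F := ∫ y, mollKer d ω ε y • f (x - y)

def pd (d : ℕ) {F : Type*} [NormedAddCommGroup F] [NormedSpace ℝ F] (f : Ed d → F) (i : Fin d)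
    (x : Ed d) : F := fderiv ℝ f x (EuclideanSpace.single i 1)

def divg (d : ℕ) (v : Ed d → Ed d) (x : Ed d) : ℝ := ∑ i, pd d v i x i

def stMeasure (d : ℕ) (T : ℝ) : Measure (ℝ × Ed d) :=
  ((volume : Measure ℝ).restrict (Set.Ioo 0 T)).prod (torusMeasure d)

def stLp (d : ℕ) (T : ℝ) (p : ℝ≥0∞) {F : Type*} [NormedAddCommGroup F] (f : ℝ → Ed d → F) : ℝ≥0∞ :=
  eLpNorm (fun q : ℝ × Ed d => f q.1 q.2) p (stMeasure d T)

def LqV (d : ℕ) (T q β δ : ℝ) (p : ℝ≥0∞) {F : Type*} [NormedAddCommGroup F]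
    (f : ℝ → Ed d → F) : ℝ≥0∞ :=
  (∫⁻ t in Set.Ioo 0 T, (Vnorm d β δ p (f t)) ^ q) ^ (1/q)

def LinfV (d : ℕ) (T β δ : ℝ) (p : ℝ≥0∞) {F : Type*} [NormedAddCommGroup F]
    (f : ℝ → Ed d → F) : ℝ≥0∞ :=
  essSup (fun t => Vnorm d β δ p (f t)) ((volume : Measure ℝ).restrict (Set.Ioo 0 T))

end

/-- MVT for rpow. -/
lemma mvt_rpow (p : ℝ) {u v : ℝ} (hu : 0 < u) (hv : 0 < v) :
    ∃ ξ : ℝ, min u v ≤ ξ ∧ ξ ≤ max u v ∧ 0 < ξ ∧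
      u ^ p - v ^ p = p * ξ ^ (p - 1) * (u - v) := by
  rcases lt_trichotomy u v with h | h | h
  · obtain ⟨c, hc, hc2⟩ := exists_hasDerivAt_eq_slope (fun t => t ^ p)
      (fun t => p * t ^ (p - 1)) h
      (by
        apply ContinuousOn.rpow_const continuousOn_id
        intro t ht
        exact Or.inl (ne_of_gt (lt_of_lt_of_le hu ht.1)))
      (fun t ht => Real.hasDerivAt_rpow_const (Or.inl (ne_of_gt (hu.trans ht.1))))
    refine ⟨c, ?_, ?_, hu.trans hc.1, ?_⟩
    · exact (min_le_left u v).trans hc.1.le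
    · exact hc.2.le.trans (le_max_right u v)
    · rw [eq_div_iff (sub_ne_zero.mpr h.ne')] at hc2
      nlinarith [hc2]
  · exact ⟨u, (min_le_left u v).trans le_rfl, h ▸ le_max_left u v, hu, by rw [h]; ring⟩
  · obtain ⟨c, hc, hc2⟩ := exists_hasDerivAt_eq_slope (fun t => t ^ p)
      (fun t => p * t ^ (p - 1)) h
      (by
        apply ContinuousOn.rpow_const continuousOn_id
        intro t ht
        exact Or.inl (ne_of_gt (lt_of_lt_of_le hv ht.1)))
      (fun t ht => Real.hasDerivAt_rpow_const (Or.inl (ne_of_gt (hv.trans ht.1))))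
    refine ⟨c, ?_, ?_, hv.trans hc.1, ?_⟩
    · exact (min_le_right u v).trans hc.1.le
    · exact hc.2.le.trans (le_max_left u v)
    · rw [eq_div_iff (sub_ne_zero.mpr h.ne')] at hc2
      nlinarith [hc2]

lemma eta_rpow_bound (γ : ℝ) (hγ : 1 < γ) {a η : ℝ} (ha : 0 < a)
    (h1 : a / 2 ≤ η) (h2 : η ≤ 2 * a) :
    η ^ (γ - 2) ≤ 2 ^ γ * a ^ (γ - 2) := by
  have hη : 0 < η := lt_of_lt_of_le (by linarith) h1
  rcases le_or_gt 2 γ with h | h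
  · calc η ^ (γ - 2) ≤ (2 * a) ^ (γ - 2) :=
          Real.rpow_le_rpow hη.le h2 (by linarith)
      _ = 2 ^ (γ - 2) * a ^ (γ - 2) := Real.mul_rpow (by norm_num) ha.le
      _ ≤ 2 ^ γ * a ^ (γ - 2) :=
          mul_le_mul_of_nonneg_right
            (Real.rpow_le_rpow_of_exponent_le one_le_two (by linarith))
            (Real.rpow_nonneg ha.le _)
  · calc η ^ (γ - 2) ≤ (a / 2) ^ (γ - 2) :=
          Real.rpow_le_rpow_of_nonpos (by linarith) h1 (by linarith)
      _ = a ^ (γ - 2) * (2 : ℝ) ^ (2 - γ) := by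
          rw [div_eq_mul_inv, Real.mul_rpow ha.le (by norm_num),
            Real.inv_rpow (by norm_num), ← Real.rpow_neg (by norm_num)]
          ring_nf
      _ ≤ 2 ^ γ * a ^ (γ - 2) := by
          rw [mul_comm]
          exact mul_le_mul_of_nonneg_right
            (Real.rpow_le_rpow_of_exponent_le one_le_two (by linarith))
            (Real.rpow_nonneg ha.le _)

lemma taylorC_pos (γ : ℝ) (hγ : 1 < γ) :
    0 < γ * (γ - 1) * 2 ^ γ + 2 ^ γ + 3 ^ γ + γ * 3 ^ γ + 1 := by
  have h2 : (0:ℝ) < 2 ^ γ := Real.rpow_pos_of_pos (by norm_num) γ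
  have h3 : (0:ℝ) < 3 ^ γ := Real.rpow_pos_of_pos (by norm_num) γ
  have h4 : (0:ℝ) < γ * (γ - 1) * 2 ^ γ :=
    mul_pos (mul_pos (by linarith) (by linarith)) h2
  have h5 : (0:ℝ) < γ * 3 ^ γ := mul_pos (by linarith) h3
  linarith

lemma taylor_rpow (γ : ℝ) (hγ : 1 < γ) :
    ∃ C : ℝ, 0 < C ∧ ∀ a b : ℝ, 0 < a → 0 < b →
      |a ^ γ - b ^ γ - γ * b ^ (γ - 1) * (a - b)| ≤
        C * (|a - b| ^ γ + a ^ (γ - 2) * (a - b) ^ 2) := by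
  refine ⟨γ * (γ - 1) * 2 ^ γ + 2 ^ γ + 3 ^ γ + γ * 3 ^ γ + 1, taylorC_pos γ hγ, ?_⟩
  intro a b ha hb
  set C := γ * (γ - 1) * 2 ^ γ + 2 ^ γ + 3 ^ γ + γ * 3 ^ γ + 1 with hC
  have habs : (0:ℝ) ≤ |a - b| ^ γ := Real.rpow_nonneg (abs_nonneg _) _
  have ha2 : (0:ℝ) ≤ a ^ (γ - 2) * (a - b) ^ 2 := by positivity
  rcases le_or_gt |a - b| (a / 2) with hcase | hcase
  · -- Taylor case: |a - b| ≤ a/2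
    obtain ⟨ξ, hξ1, hξ2, hξ0, hξeq⟩ := mvt_rpow γ ha hb
    obtain ⟨η, hη1, hη2, hη0, hηeq⟩ := mvt_rpow (γ - 1) hξ0 hb
    have hmin : a / 2 ≤ min a b := by
      rcases abs_sub_le_iff.mp hcase with ⟨h1, h2⟩
      simp only [le_min_iff]; constructor <;> linarith
    have hmax : max a b ≤ 2 * a := by
      rcases abs_sub_le_iff.mp hcase with ⟨h1, h2⟩
      simp only [max_le_iff]; constructor <;> linarith
    have hη1' : a / 2 ≤ η :=
      le_trans (le_trans hmin (le_min hξ1 (min_le_right a b))) hη1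
    have hη2' : η ≤ 2 * a :=
      le_trans (le_trans hη2 (max_le hξ2 (le_max_right a b))) hmax
    have hξb : |ξ - b| ≤ |a - b| := by
      rcases le_total a b with h | h
      · rw [min_eq_left h] at hξ1
        rw [max_eq_right h] at hξ2
        rw [abs_of_nonpos (by linarith : ξ - b ≤ 0), abs_of_nonpos (by linarith : a - b ≤ 0)]
        linarith
      · rw [min_eq_right h] at hξ1
        rw [max_eq_left h] at hξ2
        rw [abs_of_nonneg (by linarith : 0 ≤ ξ - b), abs_of_nonneg (by linarith : 0 ≤ a - b)]
        linarith
    have key : a ^ γ - b ^ γ - γ * b ^ (γ - 1) * (a - b)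
        = γ * ((γ - 1) * η ^ (γ - 1 - 1) * (ξ - b)) * (a - b) := by
      rw [hξeq, ← hηeq]; ring
    rw [key]
    have hγ2 : γ - 1 - 1 = γ - 2 := by ring
    rw [hγ2] at *
    have hbound : |γ * ((γ - 1) * η ^ (γ - 2) * (ξ - b)) * (a - b)|
        = γ * (γ - 1) * η ^ (γ - 2) * (|ξ - b| * |a - b|) := by
      rw [abs_mul, abs_mul, abs_mul, abs_mul]
      rw [abs_of_nonneg (by linarith : (0:ℝ) ≤ γ), abs_of_nonneg (by linarith : (0:ℝ) ≤ γ - 1),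
        abs_of_nonneg (Real.rpow_nonneg hη0.le _)]
      ring
    rw [hbound]
    have hη3 : η ^ (γ - 2) ≤ 2 ^ γ * a ^ (γ - 2) := eta_rpow_bound γ hγ ha hη1' hη2'
    have h5 : |ξ - b| * |a - b| ≤ (a - b) ^ 2 := by
      calc |ξ - b| * |a - b| ≤ |a - b| * |a - b| :=
            mul_le_mul_of_nonneg_right hξb (abs_nonneg _)
        _ = (a - b) ^ 2 := by rw [abs_mul_abs_self]; ring
    calc γ * (γ - 1) * η ^ (γ - 2) * (|ξ - b| * |a - b|)
        ≤ γ * (γ - 1) * (2 ^ γ * a ^ (γ - 2)) * (a - b) ^ 2 := by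
          have h0 : (0:ℝ) ≤ γ * (γ - 1) := by nlinarith
          have := mul_le_mul (mul_le_mul_of_nonneg_left hη3 h0) h5
            (by positivity) (by positivity)
          linarith [this]
      _ = γ * (γ - 1) * 2 ^ γ * (a ^ (γ - 2) * (a - b) ^ 2) := by ring
      _ ≤ C * (a ^ (γ - 2) * (a - b) ^ 2) := by
          refine mul_le_mul_of_nonneg_right ?_ ha2
          rw [hC]
          have h2 : (0:ℝ) < 2 ^ γ := Real.rpow_pos_of_pos (by norm_num) γ
          have h3 : (0:ℝ) < 3 ^ γ := Real.rpow_pos_of_pos (by norm_num) γ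
          have h5 : (0:ℝ) < γ * 3 ^ γ := mul_pos (by linarith) h3
          linarith
      _ ≤ C * (|a - b| ^ γ + a ^ (γ - 2) * (a - b) ^ 2) :=
          mul_le_mul_of_nonneg_left (le_add_of_nonneg_left habs)
            (hC ▸ (taylorC_pos γ hγ).le)
  · -- crude case: a/2 < |a - b|
    have hD : 0 < |a - b| := lt_trans (by linarith) hcase
    have hA : a ≤ 2 * |a - b| := by linarith
    have hB : b ≤ 3 * |a - b| := by
      have : b - a ≤ |a - b| := by rw [abs_sub_comm]; exact le_abs_self _
      linarith
    have h1 : a ^ γ ≤ 2 ^ γ * |a - b| ^ γ := by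
      rw [← Real.mul_rpow (by norm_num) (abs_nonneg _)]
      exact Real.rpow_le_rpow ha.le hA (by linarith)
    have h2 : b ^ γ ≤ 3 ^ γ * |a - b| ^ γ := by
      rw [← Real.mul_rpow (by norm_num) (abs_nonneg _)]
      exact Real.rpow_le_rpow hb.le hB (by linarith)
    have h3 : b ^ (γ - 1) * |a - b| ≤ 3 ^ γ * |a - b| ^ γ := by
      have e1 : b ^ (γ - 1) ≤ (3 * |a - b|) ^ (γ - 1) :=
        Real.rpow_le_rpow hb.le hB (by linarith)
      have e2 : (3 * |a - b|) ^ (γ - 1) = 3 ^ (γ-1) * |a - b| ^ (γ - 1) :=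
        Real.mul_rpow (by norm_num) (abs_nonneg _)
      have e3 : |a - b| ^ (γ - 1) * |a - b| = |a - b| ^ γ := by
        nth_rewrite 2 [← Real.rpow_one |a - b|]
        rw [← Real.rpow_add hD]
        norm_num
      have e4 : (3:ℝ) ^ (γ - 1) ≤ 3 ^ γ :=
        Real.rpow_le_rpow_of_exponent_le (by norm_num) (by linarith)
      calc b ^ (γ - 1) * |a - b| ≤ 3 ^ (γ-1) * |a - b| ^ (γ - 1) * |a - b| := by
            rw [← e2]; exact mul_le_mul_of_nonneg_right e1 (abs_nonneg _)
        _ = 3 ^ (γ-1) * |a - b| ^ γ := by rw [mul_assoc, e3]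
        _ ≤ 3 ^ γ * |a - b| ^ γ :=
            mul_le_mul_of_nonneg_right e4 (Real.rpow_nonneg (abs_nonneg _) _)
    have g1 : |a ^ γ| = a ^ γ := abs_of_nonneg (Real.rpow_nonneg ha.le _)
    have g2 : |-(b ^ γ)| = b ^ γ := by
      rw [abs_neg]; exact abs_of_nonneg (Real.rpow_nonneg hb.le _)
    have g3 : |-(γ * b ^ (γ - 1) * (a - b))| = γ * (b ^ (γ - 1) * |a - b|) := by
      rw [abs_neg, abs_mul, abs_mul, abs_of_nonneg (by linarith : (0:ℝ) ≤ γ),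
        abs_of_nonneg (Real.rpow_nonneg hb.le _)]
      ring
    have htri : |a ^ γ - b ^ γ - γ * b ^ (γ - 1) * (a - b)|
        ≤ a ^ γ + b ^ γ + γ * (b ^ (γ - 1) * |a - b|) := by
      calc |a ^ γ - b ^ γ - γ * b ^ (γ - 1) * (a - b)|
          = |a ^ γ + -(b ^ γ) + -(γ * b ^ (γ - 1) * (a - b))| := by
            rw [sub_eq_add_neg, sub_eq_add_neg]
        _ ≤ |a ^ γ + -(b ^ γ)| + |-(γ * b ^ (γ - 1) * (a - b))| := abs_add_le _ _
        _ ≤ |a ^ γ| + |-(b ^ γ)| + |-(γ * b ^ (γ - 1) * (a - b))| := by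
            linarith [abs_add_le (a ^ γ) (-(b ^ γ))]
        _ = a ^ γ + b ^ γ + γ * (b ^ (γ - 1) * |a - b|) := by rw [g1, g2, g3]
    have hCpos : (0:ℝ) < C := hC ▸ taylorC_pos γ hγ
    calc |a ^ γ - b ^ γ - γ * b ^ (γ - 1) * (a - b)|
        ≤ a ^ γ + b ^ γ + γ * (b ^ (γ - 1) * |a - b|) := htri
      _ ≤ 2 ^ γ * |a - b| ^ γ + 3 ^ γ * |a - b| ^ γ + γ * (3 ^ γ * |a - b| ^ γ) := by
          have := mul_le_mul_of_nonneg_left h3 (by linarith : (0:ℝ) ≤ γ)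
          linarith
      _ = (2 ^ γ + 3 ^ γ + γ * 3 ^ γ) * |a - b| ^ γ := by ring
      _ ≤ C * |a - b| ^ γ := by
          refine mul_le_mul_of_nonneg_right ?_ habs
          rw [hC]
          have h2 : (0:ℝ) < 2 ^ γ := Real.rpow_pos_of_pos (by norm_num) γ
          have h4 : (0:ℝ) < γ * (γ - 1) * 2 ^ γ :=
            mul_pos (mul_pos (by linarith) (by linarith)) h2
          linarith
      _ ≤ C * (|a - b| ^ γ + a ^ (γ - 2) * (a - b) ^ 2) :=
          mul_le_mul_of_nonneg_left (le_add_of_nonneg_right ha2) hCpos.le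

open scoped NNReal ENNReal in
lemma jensen_weight {α : Type*} [MeasurableSpace α] (μ0 : Measure α) (k : α → ℝ≥0)
    (hk : Measurable k) (hk1 : ∫⁻ x, (k x : ℝ≥0∞) ∂μ0 = 1)
    (p : ℝ) (hp : 1 ≤ p) (f : α → ℝ) (hf0 : ∀ x, 0 ≤ f x)
    (hfi : Integrable (fun x => (k x : ℝ) * f x) μ0)
    (hfpi : Integrable (fun x => (k x : ℝ) * f x ^ p) μ0) :
    (∫ x, (k x : ℝ) * f x ∂μ0) ^ p ≤ ∫ x, (k x : ℝ) * f x ^ p ∂μ0 := by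
  set μ := μ0.withDensity (fun x => (k x : ℝ≥0∞)) with hμ
  have hprob : IsProbabilityMeasure μ := by
    constructor
    rw [hμ, withDensity_apply _ MeasurableSet.univ, setLIntegral_univ]
    exact hk1
  have h1 : ∫ x, f x ∂μ = ∫ x, (k x : ℝ) * f x ∂μ0 := by
    rw [hμ, integral_withDensity_eq_integral_smul hk]
    simp only [NNReal.smul_def, smul_eq_mul]
  have h2 : ∫ x, f x ^ p ∂μ = ∫ x, (k x : ℝ) * f x ^ p ∂μ0 := by
    rw [hμ, integral_withDensity_eq_integral_smul hk]
    simp only [NNReal.smul_def, smul_eq_mul]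
  have hfiμ : Integrable f μ := by
    rw [hμ, integrable_withDensity_iff_integrable_smul hk]
    simpa only [NNReal.smul_def, smul_eq_mul] using hfi
  have hfpiμ : Integrable (fun x => f x ^ p) μ := by
    rw [hμ, integrable_withDensity_iff_integrable_smul hk]
    simpa only [NNReal.smul_def, smul_eq_mul] using hfpi
  have := (convexOn_rpow hp).map_integral_le (μ := μ) (f := f)
    (fun x hx => (Real.continuousAt_rpow_const x p
      (Or.inr (le_trans zero_le_one hp))).continuousWithinAt)
    isClosed_Ici
    (Filter.Eventually.of_forall fun x => Set.mem_Ici.mpr (hf0 x))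
    hfiμ hfpiμ
  rw [h1, h2] at this
  exact this

/-- pointwise estimate for the mollification of `ρ^γ`. -/
theorem moll_rpow_sub_rpow_moll_pointwise_bound (γ : ℝ) (hγ : 1 < γ) :
    ∃ C : ℝ, 0 < C ∧
      ∀ (d : ℕ) (ω : Ed d → ℝ), IsMollifier d ω →
      ∀ ρ : Ed d → ℝ, Measurable ρ → PeriodicF ρ → (∀ x, 0 < ρ x) →
      (∃ m M : ℝ, 0 < m ∧ ∀ x, m ≤ ρ x ∧ ρ x ≤ M) →
      ∀ ε : ℝ, 0 < ε →
      ∀ᵐ x ∂(torusMeasure d),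
        |moll d ω ε (fun y => ρ y ^ γ) x - (moll d ω ε ρ x) ^ γ|
          ≤ C * (∫ y, |ρ (x - y) - ρ x| ^ γ * mollKer d ω ε y)
            + C * (∫ y, ρ (x - y) ^ (γ - 2) * |ρ (x - y) - ρ x| ^ 2 * mollKer d ω ε y)
            + C * (∫ y, ρ (x - y) * mollKer d ω ε y) ^ (γ - 2) *
                (∫ y, |ρ (x - y) - ρ x| ^ 2 * mollKer d ω ε y) := by
  obtain ⟨Ct, hCt, htaylor⟩ := taylor_rpow γ hγ
  refine ⟨2 * Ct, by linarith, ?_⟩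
  intro d ω hω ρ hρmeas _hper hρpos hbd ε hε
  obtain ⟨m, M, hm, hbound⟩ := hbd
  have hγ0 : (0:ℝ) ≤ γ := by linarith
  set k := mollKer d ω ε with hk
  -- basic facts about the kernel
  have hkcont : Continuous k := by
    rw [hk]
    unfold mollKer
    exact continuous_const.mul (hω.smooth.continuous.comp (continuous_const_smul _))
  have hk0 : ∀ y, 0 ≤ k y := fun y =>
    mul_nonneg (pow_nonneg (inv_nonneg.mpr hε.le) d) (hω.nonneg _)
  have hksupp : HasCompactSupport k := by
    apply HasCompactSupport.intro (isCompact_closedBall (0 : Ed d) ε)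
    intro y hy
    have hnorm : ε < ‖y‖ := by
      simpa [Metric.mem_closedBall, dist_zero_right, not_le] using hy
    have hout : ω (ε⁻¹ • y) = 0 := by
      by_contra h
      have hmem := hω.support_subset (Function.mem_support.mpr h)
      rw [Metric.mem_closedBall, dist_zero_right, norm_smul] at hmem
      have : ‖(ε⁻¹ : ℝ)‖ = ε⁻¹ := by
        rw [Real.norm_eq_abs, abs_of_pos (inv_pos.mpr hε)]
      rw [this] at hmem
      have h2 : (1:ℝ) < ε⁻¹ * ‖y‖ := by
        calc (1:ℝ) = ε⁻¹ * ε := by field_simp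
          _ < ε⁻¹ * ‖y‖ := by
              exact mul_lt_mul_of_pos_left hnorm (inv_pos.mpr hε)
      linarith
    rw [hk]
    unfold mollKer
    rw [hout, mul_zero]
  have hkint : Integrable k := hkcont.integrable_of_hasCompactSupport hksupp
  have hk1 : ∫ y, k y = 1 := by
    rw [hk]
    unfold mollKer
    rw [integral_const_mul, Measure.integral_comp_inv_smul volume ω ε]
    rw [finrank_euclideanSpace_fin, hω.integral_one, smul_eq_mul, mul_one,
      abs_of_pos (pow_pos hε d), inv_pow, inv_mul_cancel₀ (pow_ne_zero d hε.ne')]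
  -- NNReal version of the kernel
  set kN : Ed d → NNReal := fun y => Real.toNNReal (k y) with hkN
  have hcoe : ∀ y, (kN y : ℝ) = k y := fun y => Real.coe_toNNReal _ (hk0 y)
  have ekN : (fun y => (kN y : ℝ)) = k := funext hcoe
  have hkNmeas : Measurable kN := hkcont.measurable.real_toNNReal
  have hkN1 : ∫⁻ y, (kN y : ℝ≥0∞) = 1 := by
    rw [lintegral_coe_eq_integral kN (ekN ▸ hkint), ekN, hk1, ENNReal.ofReal_one]
  -- generic integrability helper
  have int_aux : ∀ g : Ed d → ℝ, Measurable g → (∃ B, ∀ y, |g y| ≤ B) →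
      Integrable (fun y => g y * k y) := by
    rintro g hgm ⟨B, hB⟩
    exact hkint.bdd_mul (c := B) hgm.aestronglyMeasurable
      (Filter.Eventually.of_forall fun y => by simpa [Real.norm_eq_abs] using hB y)
  -- now fix x
  refine Filter.Eventually.of_forall (fun x => ?_)
  have hkmeas : Measurable k := hkcont.measurable
  have hgm : ∀ y : Ed d, m ≤ ρ (x - y) := fun y => (hbound _).1
  have hgM : ∀ y : Ed d, ρ (x - y) ≤ M := fun y => (hbound _).2
  have hgpos : ∀ y : Ed d, 0 < ρ (x - y) := fun y => hρpos _
  have hrm : m ≤ ρ x := (hbound x).1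
  have hrM : ρ x ≤ M := (hbound x).2
  have hrpos : 0 < ρ x := hρpos x
  have hMpos : 0 < M := lt_of_lt_of_le (lt_of_lt_of_le hm hrm) hrM
  have hgmeas : Measurable (fun y : Ed d => ρ (x - y)) :=
    hρmeas.comp (measurable_id.const_sub x)
  have hΔbd : ∀ y : Ed d, |ρ (x - y) - ρ x| ≤ M - m := fun y =>
    abs_le.mpr ⟨by linarith [hgm y, hgM y], by linarith [hgm y, hgM y]⟩
  have hΔmeas : Measurable (fun y : Ed d => |ρ (x - y) - ρ x|) :=
    (hgmeas.sub measurable_const).abs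
  -- integrability of all the integrands appearing
  have hint_g : Integrable (fun y => ρ (x - y) * k y) :=
    int_aux _ hgmeas ⟨M, fun y => by rw [abs_of_pos (hgpos y)]; exact hgM y⟩
  have hint_ggam : Integrable (fun y => ρ (x - y) ^ γ * k y) :=
    int_aux _ (by fun_prop) ⟨M ^ γ, fun y => by
      rw [abs_of_nonneg (Real.rpow_nonneg (hgpos y).le _)]
      exact Real.rpow_le_rpow (hgpos y).le (hgM y) hγ0⟩
  have hint_d1 : Integrable (fun y => |ρ (x - y) - ρ x| * k y) :=
    int_aux _ hΔmeas ⟨M - m, fun y => by rw [abs_abs]; exact hΔbd y⟩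
  have hint_dgam : Integrable (fun y => |ρ (x - y) - ρ x| ^ γ * k y) :=
    int_aux _ (by fun_prop) ⟨(M - m) ^ γ, fun y => by
      rw [abs_of_nonneg (Real.rpow_nonneg (abs_nonneg _) _)]
      exact Real.rpow_le_rpow (abs_nonneg _) (hΔbd y) hγ0⟩
  have hint_d2 : Integrable (fun y => |ρ (x - y) - ρ x| ^ 2 * k y) :=
    int_aux _ (by fun_prop) ⟨(M - m) ^ 2, fun y => by
      rw [abs_of_nonneg (pow_nonneg (abs_nonneg _) 2)]
      exact pow_le_pow_left₀ (abs_nonneg _) (hΔbd y) 2⟩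
  have hg2bd : ∀ y : Ed d, ρ (x - y) ^ (γ - 2) ≤ m ^ (γ - 2) + M ^ (γ - 2) := by
    intro y
    rcases le_or_gt 0 (γ - 2) with h | h
    · have h1 := Real.rpow_le_rpow (hgpos y).le (hgM y) h
      have h2 : (0:ℝ) ≤ m ^ (γ - 2) := Real.rpow_nonneg hm.le _
      linarith
    · have h1 := Real.rpow_le_rpow_of_nonpos hm (hgm y) h.le
      have h2 : (0:ℝ) ≤ M ^ (γ - 2) := Real.rpow_nonneg hMpos.le _
      linarith
  have hint_pow2 : Integrable
      (fun y => ρ (x - y) ^ (γ - 2) * |ρ (x - y) - ρ x| ^ 2 * k y) :=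
    int_aux _ (by fun_prop) ⟨(m ^ (γ - 2) + M ^ (γ - 2)) * (M - m) ^ 2, fun y => by
      rw [abs_mul, abs_of_nonneg (Real.rpow_nonneg (hgpos y).le _),
        abs_of_nonneg (pow_nonneg (abs_nonneg _) 2)]
      exact mul_le_mul (hg2bd y) (pow_le_pow_left₀ (abs_nonneg _) (hΔbd y) 2)
        (pow_nonneg (abs_nonneg _) 2)
        (add_nonneg (Real.rpow_nonneg hm.le _) (Real.rpow_nonneg hMpos.le _))⟩
  -- rewrite the two mollifications
  have hA : moll d ω ε (fun z => ρ z ^ γ) x = ∫ y, ρ (x - y) ^ γ * k y := by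
    rw [moll]
    congr 1
    funext y
    rw [smul_eq_mul, mul_comm]
  have hB : moll d ω ε ρ x = ∫ y, ρ (x - y) * k y := by
    rw [moll]
    congr 1
    funext y
    rw [smul_eq_mul, mul_comm]
  -- positivity of the mollified density
  have hRm' : m ≤ ∫ y, ρ (x - y) * k y := by
    have h := integral_mono (hkint.const_mul m) hint_g
      (fun y => mul_le_mul_of_nonneg_right (hgm y) (hk0 y))
    rwa [integral_const_mul, hk1, mul_one] at h
  have hRpos : 0 < ∫ y, ρ (x - y) * k y := lt_of_lt_of_le hm hRm'
  have hRpow : (0:ℝ) ≤ (∫ y, ρ (x - y) * k y) ^ (γ - 2) :=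
    Real.rpow_nonneg hRpos.le _
  -- nonnegativity of the three target integrals
  have hI1n : (0:ℝ) ≤ ∫ y, |ρ (x - y) - ρ x| ^ γ * k y :=
    integral_nonneg fun y => mul_nonneg (Real.rpow_nonneg (abs_nonneg _) _) (hk0 y)
  have hI2n : (0:ℝ) ≤ ∫ y, ρ (x - y) ^ (γ - 2) * |ρ (x - y) - ρ x| ^ 2 * k y :=
    integral_nonneg fun y => mul_nonneg (mul_nonneg (Real.rpow_nonneg (hgpos y).le _)
      (pow_nonneg (abs_nonneg _) 2)) (hk0 y)
  have hI3n : (0:ℝ) ≤ ∫ y, |ρ (x - y) - ρ x| ^ 2 * k y :=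
    integral_nonneg fun y => mul_nonneg (pow_nonneg (abs_nonneg _) 2) (hk0 y)
  -- the Taylor remainder term
  have hTpt : ∀ y, ‖(ρ (x - y) ^ γ - ρ x ^ γ - γ * ρ x ^ (γ - 1) * (ρ (x - y) - ρ x)) * k y‖
      ≤ Ct * (|ρ (x - y) - ρ x| ^ γ * k y
          + ρ (x - y) ^ (γ - 2) * |ρ (x - y) - ρ x| ^ 2 * k y) := by
    intro y
    rw [Real.norm_eq_abs, abs_mul, abs_of_nonneg (hk0 y)]
    calc |ρ (x - y) ^ γ - ρ x ^ γ - γ * ρ x ^ (γ - 1) * (ρ (x - y) - ρ x)| * k y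
        ≤ (Ct * (|ρ (x - y) - ρ x| ^ γ
            + ρ (x - y) ^ (γ - 2) * (ρ (x - y) - ρ x) ^ 2)) * k y :=
          mul_le_mul_of_nonneg_right (htaylor _ _ (hgpos y) hrpos) (hk0 y)
      _ = Ct * (|ρ (x - y) - ρ x| ^ γ * k y
            + ρ (x - y) ^ (γ - 2) * |ρ (x - y) - ρ x| ^ 2 * k y) := by
          rw [← sq_abs (ρ (x - y) - ρ x)]; ring
  have hint_maj : Integrable (fun y => Ct * (|ρ (x - y) - ρ x| ^ γ * k y
      + ρ (x - y) ^ (γ - 2) * |ρ (x - y) - ρ x| ^ 2 * k y)) :=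
    (hint_dgam.add hint_pow2).const_mul Ct
  have hint_T : Integrable (fun y =>
      (ρ (x - y) ^ γ - ρ x ^ γ - γ * ρ x ^ (γ - 1) * (ρ (x - y) - ρ x)) * k y) :=
    Integrable.mono' hint_maj (Measurable.aestronglyMeasurable (by fun_prop))
      (Filter.Eventually.of_forall hTpt)
  have hTbound : |∫ y, (ρ (x - y) ^ γ - ρ x ^ γ - γ * ρ x ^ (γ - 1) * (ρ (x - y) - ρ x)) * k y|
      ≤ Ct * (∫ y, |ρ (x - y) - ρ x| ^ γ * k y)
        + Ct * (∫ y, ρ (x - y) ^ (γ - 2) * |ρ (x - y) - ρ x| ^ 2 * k y) := by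
    have h6 := norm_integral_le_integral_norm (μ := volume) (fun y =>
      (ρ (x - y) ^ γ - ρ x ^ γ - γ * ρ x ^ (γ - 1) * (ρ (x - y) - ρ x)) * k y)
    rw [Real.norm_eq_abs] at h6
    have h7 : (∫ y, ‖(ρ (x - y) ^ γ - ρ x ^ γ - γ * ρ x ^ (γ - 1) * (ρ (x - y) - ρ x)) * k y‖)
        ≤ ∫ y, Ct * (|ρ (x - y) - ρ x| ^ γ * k y
            + ρ (x - y) ^ (γ - 2) * |ρ (x - y) - ρ x| ^ 2 * k y) :=
      integral_mono hint_T.norm hint_maj hTpt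
    have h8 : (∫ y, Ct * (|ρ (x - y) - ρ x| ^ γ * k y
          + ρ (x - y) ^ (γ - 2) * |ρ (x - y) - ρ x| ^ 2 * k y))
        = Ct * (∫ y, |ρ (x - y) - ρ x| ^ γ * k y)
          + Ct * (∫ y, ρ (x - y) ^ (γ - 2) * |ρ (x - y) - ρ x| ^ 2 * k y) := by
      rw [integral_const_mul, integral_add hint_dgam hint_pow2]
      ring
    linarith
  -- algebraic identity
  have hiden : moll d ω ε (fun z => ρ z ^ γ) x - (moll d ω ε ρ x) ^ γ
      = (∫ y, (ρ (x - y) ^ γ - ρ x ^ γ - γ * ρ x ^ (γ - 1) * (ρ (x - y) - ρ x)) * k y)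
        - ((∫ y, ρ (x - y) * k y) ^ γ - ρ x ^ γ
            - γ * ρ x ^ (γ - 1) * ((∫ y, ρ (x - y) * k y) - ρ x)) := by
    have e : (fun y => (ρ (x - y) ^ γ - ρ x ^ γ - γ * ρ x ^ (γ - 1) * (ρ (x - y) - ρ x)) * k y)
        = fun y => ρ (x - y) ^ γ * k y - ρ x ^ γ * k y
            - γ * ρ x ^ (γ - 1) * (ρ (x - y) * k y - ρ x * k y) := funext fun y => by ring
    have ih1 : Integrable (fun y => ρ (x - y) ^ γ * k y - ρ x ^ γ * k y) volume :=
      hint_ggam.sub (hkint.const_mul (ρ x ^ γ))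
    have ih2 : Integrable (fun y => ρ (x - y) * k y - ρ x * k y) volume :=
      hint_g.sub (hkint.const_mul (ρ x))
    have ih3 : Integrable
        (fun y => γ * ρ x ^ (γ - 1) * (ρ (x - y) * k y - ρ x * k y)) volume :=
      ih2.const_mul _
    rw [hA, hB, e,
      integral_sub ih1 ih3,
      integral_sub hint_ggam (hkint.const_mul (ρ x ^ γ)),
      integral_const_mul, integral_const_mul,
      integral_sub hint_g (hkint.const_mul (ρ x)),
      integral_const_mul, hk1]
    ring
  -- Jensen's inequality steps
  have hJ0 : (0:ℝ) ≤ ∫ y, |ρ (x - y) - ρ x| * k y :=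
    integral_nonneg fun y => mul_nonneg (abs_nonneg _) (hk0 y)
  have hRr : |(∫ y, ρ (x - y) * k y) - ρ x| ≤ ∫ y, |ρ (x - y) - ρ x| * k y := by
    have e2 : (fun y => (ρ (x - y) - ρ x) * k y)
        = fun y => ρ (x - y) * k y - ρ x * k y := funext fun y => by ring
    have h5 : (∫ y, ρ (x - y) * k y) - ρ x = ∫ y, (ρ (x - y) - ρ x) * k y := by
      rw [e2, integral_sub hint_g (hkint.const_mul (ρ x)), integral_const_mul, hk1, mul_one]
    rw [h5]
    have h6 := norm_integral_le_integral_norm (μ := volume) (fun y => (ρ (x - y) - ρ x) * k y)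
    rw [Real.norm_eq_abs] at h6
    refine h6.trans (le_of_eq ?_)
    congr 1
    funext y
    rw [Real.norm_eq_abs, abs_mul, abs_of_nonneg (hk0 y)]
  have eA : (fun y => (kN y : ℝ) * |ρ (x - y) - ρ x|)
      = fun y => |ρ (x - y) - ρ x| * k y := funext fun y => by rw [hcoe]; ring
  have eB : (fun y => (kN y : ℝ) * |ρ (x - y) - ρ x| ^ γ)
      = fun y => |ρ (x - y) - ρ x| ^ γ * k y := funext fun y => by rw [hcoe]; ring
  have eC : (fun y => (kN y : ℝ) * |ρ (x - y) - ρ x| ^ (2:ℝ))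
      = fun y => |ρ (x - y) - ρ x| ^ 2 * k y := funext fun y => by
    rw [hcoe, Real.rpow_two]; ring
  have hjen1 := jensen_weight volume kN hkNmeas hkN1 γ hγ.le
    (fun y => |ρ (x - y) - ρ x|) (fun y => abs_nonneg _)
    (by rw [eA]; exact hint_d1) (by rw [eB]; exact hint_dgam)
  rw [eA, eB] at hjen1
  have hjen2 := jensen_weight volume kN hkNmeas hkN1 2 one_le_two
    (fun y => |ρ (x - y) - ρ x|) (fun y => abs_nonneg _)
    (by rw [eA]; exact hint_d1) (by rw [eC]; exact hint_d2)
  rw [eA, eC, Real.rpow_two] at hjen2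
  -- bound on the second error term
  have h7 : |(∫ y, ρ (x - y) * k y) - ρ x| ^ γ ≤ ∫ y, |ρ (x - y) - ρ x| ^ γ * k y :=
    (Real.rpow_le_rpow (abs_nonneg _) hRr hγ0).trans hjen1
  have h8 : ((∫ y, ρ (x - y) * k y) - ρ x) ^ 2 ≤ ∫ y, |ρ (x - y) - ρ x| ^ 2 * k y := by
    calc ((∫ y, ρ (x - y) * k y) - ρ x) ^ 2
        = |(∫ y, ρ (x - y) * k y) - ρ x| ^ 2 := (sq_abs _).symm
      _ ≤ (∫ y, |ρ (x - y) - ρ x| * k y) ^ 2 := pow_le_pow_left₀ (abs_nonneg _) hRr 2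
      _ ≤ ∫ y, |ρ (x - y) - ρ x| ^ 2 * k y := hjen2
  have hSfinal : |(∫ y, ρ (x - y) * k y) ^ γ - ρ x ^ γ
        - γ * ρ x ^ (γ - 1) * ((∫ y, ρ (x - y) * k y) - ρ x)|
      ≤ Ct * (∫ y, |ρ (x - y) - ρ x| ^ γ * k y)
        + Ct * ((∫ y, ρ (x - y) * k y) ^ (γ - 2) * (∫ y, |ρ (x - y) - ρ x| ^ 2 * k y)) := by
    calc |(∫ y, ρ (x - y) * k y) ^ γ - ρ x ^ γ
          - γ * ρ x ^ (γ - 1) * ((∫ y, ρ (x - y) * k y) - ρ x)|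
        ≤ Ct * (|(∫ y, ρ (x - y) * k y) - ρ x| ^ γ
            + (∫ y, ρ (x - y) * k y) ^ (γ - 2) * ((∫ y, ρ (x - y) * k y) - ρ x) ^ 2) :=
          htaylor _ _ hRpos hrpos
      _ ≤ Ct * ((∫ y, |ρ (x - y) - ρ x| ^ γ * k y)
            + (∫ y, ρ (x - y) * k y) ^ (γ - 2) * (∫ y, |ρ (x - y) - ρ x| ^ 2 * k y)) := by
          refine mul_le_mul_of_nonneg_left ?_ hCt.le
          exact add_le_add h7 (mul_le_mul_of_nonneg_left h8 hRpow)
      _ = Ct * (∫ y, |ρ (x - y) - ρ x| ^ γ * k y)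
          + Ct * ((∫ y, ρ (x - y) * k y) ^ (γ - 2)
              * (∫ y, |ρ (x - y) - ρ x| ^ 2 * k y)) := by ring
  -- conclusion
  rw [hiden]
  have habs := abs_sub
    (∫ y, (ρ (x - y) ^ γ - ρ x ^ γ - γ * ρ x ^ (γ - 1) * (ρ (x - y) - ρ x)) * k y)
    ((∫ y, ρ (x - y) * k y) ^ γ - ρ x ^ γ
      - γ * ρ x ^ (γ - 1) * ((∫ y, ρ (x - y) * k y) - ρ x))
  have hz1 : (0:ℝ) ≤ Ct * (∫ y, |ρ (x - y) - ρ x| ^ γ * k y) := mul_nonneg hCt.le hI1n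
  have hz2 : (0:ℝ) ≤ Ct * (∫ y, ρ (x - y) ^ (γ - 2) * |ρ (x - y) - ρ x| ^ 2 * k y) :=
    mul_nonneg hCt.le hI2n
  have hz3 : (0:ℝ) ≤ Ct * ((∫ y, ρ (x - y) * k y) ^ (γ - 2)
      * (∫ y, |ρ (x - y) - ρ x| ^ 2 * k y)) :=
    mul_nonneg hCt.le (mul_nonneg hRpow hI3n)
  linarith
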